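/- Fix k ∈ {2,3}. Suppose n and m are positive integers such that the multiset consisting of n copies of 1/2 and m copies of -1/2 satisfies e_j > 0 for 1 ≤ j < k and e_k = 0. Then (n,m) must be of one of the following forms: if k = 2, then n = (ℓ+1)(ℓ+2)/2 and m = ℓ(ℓ+1)/2 for some positive integer ℓ; if k = 3, then either n = (ℓ+1)(3ℓ+2)/2 and m = ℓ(3ℓ-1)/2, or n = (ℓ+1)(3ℓ+4)/2 and m = ℓ(3ℓ+1)/2, for some positive integer ℓ. -/

import Mathlib

/-- The multiset of eigenvalues: `n` copies of `1/2` and `m` copies of `-1/2`. -/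
noncomputable def schoutenEigenvalues (n m : ℕ) : Multiset ℝ :=
  Multiset.replicate n ((1 : ℝ) / 2) + Multiset.replicate m (-(1 : ℝ) / 2)

lemma myesymm_cons (a : ℝ) (s : Multiset ℝ) (k : ℕ) :
    (a ::ₘ s).esymm (k + 1) = s.esymm (k + 1) + a * s.esymm k := by
  simp only [Multiset.esymm, Multiset.powersetCard_cons, Multiset.map_add, Multiset.sum_add,
    Multiset.map_map, Function.comp_def, Multiset.prod_cons, ← Multiset.sum_map_mul_left]

lemma myesymm_one (s : Multiset ℝ) : s.esymm 1 = s.sum := by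
  simp [Multiset.esymm, Multiset.powersetCard_one, Multiset.map_map, Function.comp_def]

lemma schouten_succ_left (n m : ℕ) :
    schoutenEigenvalues (n + 1) m = ((1:ℝ)/2) ::ₘ schoutenEigenvalues n m := by
  simp [schoutenEigenvalues, Multiset.replicate_succ, Multiset.cons_add]

lemma schouten_succ_right (n m : ℕ) :
    schoutenEigenvalues n (m + 1) = (-(1:ℝ)/2) ::ₘ schoutenEigenvalues n m := by
  simp [schoutenEigenvalues, Multiset.replicate_succ, Multiset.add_cons]

lemma schouten_e1 (n m : ℕ) :
    (schoutenEigenvalues n m).esymm 1 = ((n : ℝ) - m) / 2 := by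
  rw [myesymm_one, schoutenEigenvalues, Multiset.sum_add, Multiset.sum_replicate,
    Multiset.sum_replicate]
  push_cast
  ring

lemma schouten_e2 (n m : ℕ) :
    (schoutenEigenvalues n m).esymm 2 = (((n:ℝ) - m)^2 - ((n:ℝ) + m)) / 8 := by
  induction n with
  | zero =>
    induction m with
    | zero => simp [schoutenEigenvalues, Multiset.esymm, Multiset.powersetCard_zero_right]
    | succ m ih =>
      rw [schouten_succ_right, show (2:ℕ) = 1 + 1 from rfl, myesymm_cons, schouten_e1, ih]
      push_cast; ring
  | succ n ih =>
    rw [schouten_succ_left, show (2:ℕ) = 1 + 1 from rfl, myesymm_cons, schouten_e1, ih]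
    push_cast; ring

lemma schouten_e3 (n m : ℕ) :
    (schoutenEigenvalues n m).esymm 3 =
      (((n:ℝ) - m) * (((n:ℝ) - m)^2 - 3 * ((n:ℝ) + m) + 2)) / 48 := by
  induction n with
  | zero =>
    induction m with
    | zero => simp [schoutenEigenvalues, Multiset.esymm, Multiset.powersetCard_zero_right]
    | succ m ih =>
      rw [schouten_succ_right, show (3:ℕ) = 2 + 1 from rfl, myesymm_cons, schouten_e2, ih]
      push_cast; ring
  | succ n ih =>
    rw [schouten_succ_left, show (3:ℕ) = 2 + 1 from rfl, myesymm_cons, schouten_e2, ih]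
    push_cast; ring

theorem dimensions_classification (k : ℕ) (hk : k = 2 ∨ k = 3)
    (n m : ℕ) (hn : 0 < n) (hm : 0 < m)
    (hpos : ∀ j, 1 ≤ j → j < k → 0 < (schoutenEigenvalues n m).esymm j)
    (hzero : (schoutenEigenvalues n m).esymm k = 0) :
    (k = 2 → ∃ ℓ : ℕ, 0 < ℓ ∧ n = (ℓ + 1) * (ℓ + 2) / 2 ∧ m = ℓ * (ℓ + 1) / 2) ∧
    (k = 3 → ∃ ℓ : ℕ, 0 < ℓ ∧
      ((n = (ℓ + 1) * (3 * ℓ + 2) / 2 ∧ m = ℓ * (3 * ℓ - 1) / 2) ∨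
       (n = (ℓ + 1) * (3 * ℓ + 4) / 2 ∧ m = ℓ * (3 * ℓ + 1) / 2))) := by
  constructor
  · -- case k = 2
    rintro rfl
    have h1 := hpos 1 le_rfl (by norm_num)
    rw [schouten_e1] at h1
    have hmn : m < n := by
      have : (m:ℝ) < n := by linarith
      exact_mod_cast this
    rw [schouten_e2] at hzero
    have hzR : ((n:ℝ) - m)^2 = (n:ℝ) + m := by
      have := (div_eq_zero_iff.mp hzero).resolve_right (by norm_num)
      linarith
    have hz : ((n:ℤ) - m)^2 = (n:ℤ) + m := by exact_mod_cast hzR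
    set ℓ : ℕ := n - m - 1 with hℓdef
    have hd : (n:ℤ) - m = (ℓ:ℤ) + 1 := by omega
    have h' : ((ℓ:ℤ) + 1)^2 = (n:ℤ) + m := by rw [← hd]; exact hz
    have hexp : ((ℓ:ℤ) + 1)^2 = (ℓ:ℤ)*ℓ + 2*ℓ + 1 := by ring
    have hs : (n:ℤ) + m = (ℓ:ℤ)*ℓ + 2*ℓ + 1 := by linarith
    have hℓpos : 0 < ℓ := by
      rcases Nat.eq_zero_or_pos ℓ with h0 | h0
      · rw [h0] at hs; norm_num at hs; omega
      · exact h0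
    refine ⟨ℓ, hℓpos, ?_, ?_⟩
    · have g1 : ((ℓ:ℤ) + 1) * ((ℓ:ℤ) + 2) = (n:ℤ) * 2 := by
        have e : ((ℓ:ℤ) + 1) * ((ℓ:ℤ) + 2) = (ℓ:ℤ)*ℓ + 3*ℓ + 2 := by ring
        linarith
      have g1' : (ℓ + 1) * (ℓ + 2) = n * 2 := by exact_mod_cast g1
      exact (Nat.div_eq_of_eq_mul_left (by norm_num) g1').symm
    · have g2 : (ℓ:ℤ) * ((ℓ:ℤ) + 1) = (m:ℤ) * 2 := by
        have e : (ℓ:ℤ) * ((ℓ:ℤ) + 1) = (ℓ:ℤ)*ℓ + ℓ := by ring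
        linarith
      have g2' : ℓ * (ℓ + 1) = m * 2 := by exact_mod_cast g2
      exact (Nat.div_eq_of_eq_mul_left (by norm_num) g2').symm
  · -- case k = 3
    rintro rfl
    have h1 := hpos 1 le_rfl (by norm_num)
    rw [schouten_e1] at h1
    have hmn : m < n := by
      have : (m:ℝ) < n := by linarith
      exact_mod_cast this
    rw [schouten_e3] at hzero
    have hne : ((n:ℝ) - m) ≠ 0 := ne_of_gt (by linarith)
    have hzR : ((n:ℝ) - m)^2 + 2 = 3 * ((n:ℝ) + m) := by
      have h0 : ((n:ℝ) - m) * (((n:ℝ) - m)^2 - 3 * ((n:ℝ) + m) + 2) = 0 := by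
        have := (div_eq_zero_iff.mp hzero).resolve_right (by norm_num)
        linarith
      have := (mul_eq_zero.mp h0).resolve_left hne
      linarith
    have hz : ((n:ℤ) - m)^2 + 2 = 3 * ((n:ℤ) + m) := by exact_mod_cast hzR
    set d : ℕ := n - m with hddef
    have hr3 : d % 3 = 0 ∨ d % 3 = 1 ∨ d % 3 = 2 := by omega
    rcases hr3 with hr | hr | hr
    · -- d ≡ 0 mod 3 : impossible
      exfalso
      set q : ℕ := d / 3 with hqdef
      have hd : (n:ℤ) - m = 3 * (q:ℤ) := by omega
      have h' : (3 * (q:ℤ))^2 + 2 = 3 * ((n:ℤ) + m) := by rw [← hd]; exact hz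
      have hdvd : (3:ℤ) ∣ 2 := ⟨(n:ℤ) + m - 3 * ((q:ℤ)*q), by nlinarith⟩
      norm_num at hdvd
    · -- d = 3ℓ + 1
      set ℓ : ℕ := d / 3 with hℓdef
      have hd : (n:ℤ) - m = 3 * (ℓ:ℤ) + 1 := by omega
      have h' : (3 * (ℓ:ℤ) + 1)^2 + 2 = 3 * ((n:ℤ) + m) := by rw [← hd]; exact hz
      have hexp : (3 * (ℓ:ℤ) + 1)^2 = 9 * ((ℓ:ℤ)*ℓ) + 6*ℓ + 1 := by ring
      have hs : (n:ℤ) + m = 3 * ((ℓ:ℤ)*ℓ) + 2*ℓ + 1 := by linarith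
      have hℓpos : 0 < ℓ := by
        rcases Nat.eq_zero_or_pos ℓ with h0 | h0
        · rw [h0] at hs; norm_num at hs; omega
        · exact h0
      refine ⟨ℓ, hℓpos, Or.inl ⟨?_, ?_⟩⟩
      · have g1 : ((ℓ:ℤ) + 1) * (3 * (ℓ:ℤ) + 2) = (n:ℤ) * 2 := by
          have e : ((ℓ:ℤ) + 1) * (3 * (ℓ:ℤ) + 2) = 3*((ℓ:ℤ)*ℓ) + 5*ℓ + 2 := by ring
          linarith
        have g1' : (ℓ + 1) * (3 * ℓ + 2) = n * 2 := by exact_mod_cast g1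
        exact (Nat.div_eq_of_eq_mul_left (by norm_num) g1').symm
      · have g2' : ℓ * (3 * ℓ - 1) = m * 2 := by
          zify [show 1 ≤ 3 * ℓ by omega]
          have e : (ℓ:ℤ) * (3 * (ℓ:ℤ) - 1) = 3*((ℓ:ℤ)*ℓ) - ℓ := by ring
          linarith
        exact (Nat.div_eq_of_eq_mul_left (by norm_num) g2').symm
    · -- d = 3ℓ + 2
      set ℓ : ℕ := d / 3 with hℓdef
      have hd : (n:ℤ) - m = 3 * (ℓ:ℤ) + 2 := by omega
      have h' : (3 * (ℓ:ℤ) + 2)^2 + 2 = 3 * ((n:ℤ) + m) := by rw [← hd]; exact hz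
      have hexp : (3 * (ℓ:ℤ) + 2)^2 = 9 * ((ℓ:ℤ)*ℓ) + 12*ℓ + 4 := by ring
      have hs : (n:ℤ) + m = 3 * ((ℓ:ℤ)*ℓ) + 4*ℓ + 2 := by linarith
      have hℓpos : 0 < ℓ := by
        rcases Nat.eq_zero_or_pos ℓ with h0 | h0
        · rw [h0] at hs hd; norm_num at hs hd; omega
        · exact h0
      refine ⟨ℓ, hℓpos, Or.inr ⟨?_, ?_⟩⟩
      · have g1 : ((ℓ:ℤ) + 1) * (3 * (ℓ:ℤ) + 4) = (n:ℤ) * 2 := by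
          have e : ((ℓ:ℤ) + 1) * (3 * (ℓ:ℤ) + 4) = 3*((ℓ:ℤ)*ℓ) + 7*ℓ + 4 := by ring
          linarith
        have g1' : (ℓ + 1) * (3 * ℓ + 4) = n * 2 := by exact_mod_cast g1
        exact (Nat.div_eq_of_eq_mul_left (by norm_num) g1').symm
      · have g2 : (ℓ:ℤ) * (3 * (ℓ:ℤ) + 1) = (m:ℤ) * 2 := by
          have e : (ℓ:ℤ) * (3 * (ℓ:ℤ) + 1) = 3*((ℓ:ℤ)*ℓ) + ℓ := by ring
          linarith
        have g2' : ℓ * (3 * ℓ + 1) = m * 2 := by exact_mod_cast g2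
        exact (Nat.div_eq_of_eq_mul_left (by norm_num) g2').symm
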